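/- For every finite coloring χ : ℤ → {1,…,r} there exist m, n, p ∈ ℕ, positive integers a₁,…,a_m, b₁,…,bₙ, c₁,…,c_p, and a color t such that the seven numbers ∏_{i=1}^{m} aᵢ, ∏_{j=1}^{n} b_j, ∏_{q=1}^{p} c_q, (∏_{j=1}^{n} b_j)·2^{Σ_{i=1}^{m} aᵢ}, (∏_{j=1}^{n} b_j)·3^{Σ_{i=1}^{m} aᵢ}, (∏_{q=1}^{p} c_q)·2^{(Σ_{i=1}^{m} aᵢ)(Σ_{j=1}^{n} b_j)}, and (∏_{q=1}^{p} c_q)·3^{(Σ_{i=1}^{m} aᵢ)(Σ_{j=1}^{n} b_j)} all receive color t under χ. -/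
import Mathlib

open Combinatorics

/-- For every finite coloring of `ℤ` there are finite sequences of positive integers
`a₁,…,a_m`, `b₁,…,bₙ`, `c₁,…,c_p` such that the seven numbers
`∏ aᵢ`, `∏ b_j`, `∏ c_q`, `(∏ b_j)·2^{Σ aᵢ}`, `(∏ b_j)·3^{Σ aᵢ}`,
`(∏ c_q)·2^{(Σ aᵢ)(Σ b_j)}`, `(∏ c_q)·3^{(Σ aᵢ)(Σ b_j)}` all get the same color. -/
theorem stmt9 (r : ℕ) (χ : ℤ → Fin r) :
    ∃ m n p : ℕ, 0 < m ∧ 0 < n ∧ 0 < p ∧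
      ∃ a : Fin m → ℕ, (∀ i, 0 < a i) ∧
      ∃ b : Fin n → ℕ, (∀ j, 0 < b j) ∧
      ∃ c : Fin p → ℕ, (∀ q, 0 < c q) ∧
      ∃ t : Fin r,
        χ ((∏ i, a i : ℕ) : ℤ) = t ∧
        χ ((∏ j, b j : ℕ) : ℤ) = t ∧
        χ ((∏ q, c q : ℕ) : ℤ) = t ∧
        χ (((∏ j, b j) * 2 ^ (∑ i, a i) : ℕ) : ℤ) = t ∧
        χ (((∏ j, b j) * 3 ^ (∑ i, a i) : ℕ) : ℤ) = t ∧
        χ (((∏ q, c q) * 2 ^ ((∑ i, a i) * (∑ j, b j)) : ℕ) : ℤ) = t ∧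
        χ (((∏ q, c q) * 3 ^ ((∑ i, a i) * (∑ j, b j)) : ℕ) : ℤ) = t := by
  classical
  -- monochromatic corners in the {2^i 3^j} grid, with step a positive multiple of any given g
  have corner : ∀ g : ℕ, 0 < g → ∃ x : ℕ × ℕ × ℕ,
      g ∣ x.2.2 ∧ 0 < x.2.2 ∧
      χ ((2 ^ (x.1 + x.2.2) * 3 ^ x.2.1 : ℕ) : ℤ) = χ ((2 ^ x.1 * 3 ^ x.2.1 : ℕ) : ℤ) ∧
      χ ((2 ^ x.1 * 3 ^ (x.2.1 + x.2.2) : ℕ) : ℤ) = χ ((2 ^ x.1 * 3 ^ x.2.1 : ℕ) : ℤ) := by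
    intro g hg
    obtain ⟨a, ha, b, c, hc⟩ := exists_mono_homothetic_copy
      ({(0,0), (g,0), (0,g)} : Finset (ℕ × ℕ))
      (fun q : ℕ × ℕ => χ ((2 ^ q.1 * 3 ^ q.2 : ℕ) : ℤ))
    have h1 := hc (0,0) (by simp)
    have h2 := hc (g,0) (by simp)
    have h3 := hc (0,g) (by simp)
    simp only [Prod.smul_mk, smul_eq_mul, Prod.mk_add_mk, mul_zero, zero_add,
      Prod.fst_add, Prod.snd_add, add_zero] at h1 h2 h3
    refine ⟨(b.1, b.2, a * g), ⟨a, mul_comm a g⟩, by positivity, ?_, ?_⟩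
    · show χ ((2 ^ (b.1 + a * g) * 3 ^ b.2 : ℕ) : ℤ) = _
      rw [add_comm b.1 (a*g)]
      exact h2.trans h1.symm
    · show χ ((2 ^ b.1 * 3 ^ (b.2 + a * g) : ℕ) : ℤ) = _
      rw [add_comm b.2 (a*g)]
      exact h3.trans h1.symm
  -- small witnesses for every realized color
  set wit : Fin r → ℕ :=
    fun t => if h : ∃ x : ℕ, 0 < x ∧ χ ((x : ℕ) : ℤ) = t then h.choose else 1 with hwit
  set W : ℕ := Finset.univ.sup wit with hW
  -- the chain of corners
  set scale : ℕ × ℕ × ℕ → ℕ := fun x => max (x.2.2 * (2 ^ x.1 * 3 ^ x.2.1)) 1 with hscale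
  have hscalepos : ∀ x, 0 < scale x := fun x => lt_max_of_lt_right one_pos
  set F : ℕ → ℕ × ℕ × ℕ := fun l => Nat.rec ((corner (W+1) (Nat.succ_pos W)).choose)
      (fun _ prev => (corner (scale prev) (hscalepos prev)).choose) l with hF
  have hF0 : (W+1) ∣ (F 0).2.2 ∧ 0 < (F 0).2.2 ∧
      χ ((2 ^ ((F 0).1 + (F 0).2.2) * 3 ^ (F 0).2.1 : ℕ) : ℤ)
        = χ ((2 ^ (F 0).1 * 3 ^ (F 0).2.1 : ℕ) : ℤ) ∧
      χ ((2 ^ (F 0).1 * 3 ^ ((F 0).2.1 + (F 0).2.2) : ℕ) : ℤ)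
        = χ ((2 ^ (F 0).1 * 3 ^ (F 0).2.1 : ℕ) : ℤ) :=
    (corner (W+1) (Nat.succ_pos W)).choose_spec
  have hFs : ∀ l, scale (F l) ∣ (F (l+1)).2.2 ∧ 0 < (F (l+1)).2.2 ∧
      χ ((2 ^ ((F (l+1)).1 + (F (l+1)).2.2) * 3 ^ (F (l+1)).2.1 : ℕ) : ℤ)
        = χ ((2 ^ (F (l+1)).1 * 3 ^ (F (l+1)).2.1 : ℕ) : ℤ) ∧
      χ ((2 ^ (F (l+1)).1 * 3 ^ ((F (l+1)).2.1 + (F (l+1)).2.2) : ℕ) : ℤ)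
        = χ ((2 ^ (F (l+1)).1 * 3 ^ (F (l+1)).2.1 : ℕ) : ℤ) :=
    fun l => (corner (scale (F l)) (hscalepos (F l))).choose_spec
  have dpos : ∀ l, 0 < (F l).2.2 := by
    intro l; cases l with
    | zero => exact hF0.2.1
    | succ l => exact (hFs l).2.1
  have arms : ∀ l,
      χ ((2 ^ ((F l).1 + (F l).2.2) * 3 ^ (F l).2.1 : ℕ) : ℤ)
        = χ ((2 ^ (F l).1 * 3 ^ (F l).2.1 : ℕ) : ℤ) ∧
      χ ((2 ^ (F l).1 * 3 ^ ((F l).2.1 + (F l).2.2) : ℕ) : ℤ)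
        = χ ((2 ^ (F l).1 * 3 ^ (F l).2.1 : ℕ) : ℤ) := by
    intro l; cases l with
    | zero => exact hF0.2.2
    | succ l => exact (hFs l).2.2
  have hscaleq : ∀ l, scale (F l) = (F l).2.2 * (2 ^ (F l).1 * 3 ^ (F l).2.1) := by
    intro l
    have h : 0 < (F l).2.2 * (2 ^ (F l).1 * 3 ^ (F l).2.1) := by
      have := dpos l; positivity
    simp [hscale, Nat.max_eq_left h]
  have step : ∀ l, (F l).2.2 * (2 ^ (F l).1 * 3 ^ (F l).2.1) ∣ (F (l+1)).2.2 :=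
    fun l => (hscaleq l) ▸ (hFs l).1
  have chain : ∀ l k, k < l → (F k).2.2 * (2 ^ (F k).1 * 3 ^ (F k).2.1) ∣ (F l).2.2 := by
    intro l
    induction l with
    | zero => omega
    | succ l ih =>
      intro k hkl
      rcases Nat.lt_succ_iff_lt_or_eq.mp hkl with h | h
      · exact (ih k h).trans ((dvd_mul_right _ _).trans (step l))
      · rw [h]; exact step l
  have Wdvd : ∀ l, (W+1) ∣ (F l).2.2 := by
    intro l; cases l with
    | zero => exact hF0.1
    | succ l => exact hF0.1.trans ((dvd_mul_right _ _).trans (chain (l+1) 0 (Nat.succ_pos l)))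
  -- pigeonhole: two corners of the same color
  obtain ⟨x, y, hne, heq⟩ := Fintype.exists_ne_map_eq_of_card_lt
    (fun l : Fin (r+1) => χ ((2 ^ (F l.val).1 * 3 ^ (F l.val).2.1 : ℕ) : ℤ)) (by simp)
  suffices main : ∀ k l : ℕ, k < l →
      χ ((2 ^ (F k).1 * 3 ^ (F k).2.1 : ℕ) : ℤ) = χ ((2 ^ (F l).1 * 3 ^ (F l).2.1 : ℕ) : ℤ) →
      (∃ m n p : ℕ, 0 < m ∧ 0 < n ∧ 0 < p ∧
      ∃ a : Fin m → ℕ, (∀ i, 0 < a i) ∧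
      ∃ b : Fin n → ℕ, (∀ j, 0 < b j) ∧
      ∃ c : Fin p → ℕ, (∀ q, 0 < c q) ∧
      ∃ t : Fin r,
        χ ((∏ i, a i : ℕ) : ℤ) = t ∧
        χ ((∏ j, b j : ℕ) : ℤ) = t ∧
        χ ((∏ q, c q : ℕ) : ℤ) = t ∧
        χ (((∏ j, b j) * 2 ^ (∑ i, a i) : ℕ) : ℤ) = t ∧
        χ (((∏ j, b j) * 3 ^ (∑ i, a i) : ℕ) : ℤ) = t ∧
        χ (((∏ q, c q) * 2 ^ ((∑ i, a i) * (∑ j, b j)) : ℕ) : ℤ) = t ∧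
        χ (((∏ q, c q) * 3 ^ ((∑ i, a i) * (∑ j, b j)) : ℕ) : ℤ) = t) by
    rcases hne.lt_or_gt with h | h
    · exact main x.val y.val h heq
    · exact main y.val x.val h heq.symm
  intro k l hkl heq
  -- names
  set i := (F k).1 with hi
  set j := (F k).2.1 with hj
  set s := (F k).2.2 with hs
  set i' := (F l).1 with hi'
  set j' := (F l).2.1 with hj'
  set S := (F l).2.2 with hS
  set t : Fin r := χ ((2 ^ i * 3 ^ j : ℕ) : ℤ) with ht
  have hspos : 0 < s := dpos k
  have hSpos : 0 < S := dpos l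
  have hdvd : s * (2 ^ i * 3 ^ j) ∣ S := chain l k hkl
  have hsW : W < s := by
    have := Nat.le_of_dvd hspos (Wdvd k); omega
  -- the witness Pa for color t
  have hex : ∃ x : ℕ, 0 < x ∧ χ ((x : ℕ) : ℤ) = t := ⟨2 ^ i * 3 ^ j, by positivity, rfl⟩
  have hPa : 0 < wit t ∧ χ ((wit t : ℕ) : ℤ) = t := by
    rw [hwit]; simp only []; rw [dif_pos hex]; exact hex.choose_spec
  have hPaW : wit t ≤ W := Finset.le_sup (Finset.mem_univ t)
  set Pa := wit t with hPadef
  set Pb := 2 ^ i * 3 ^ j with hPb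
  set Pc := 2 ^ i' * 3 ^ j' with hPc
  have hPbpos : 0 < Pb := by positivity
  have hPas : Pa ≤ s := le_of_lt (lt_of_le_of_lt hPaW hsW)
  -- v := S / s
  set v := S / s with hv
  have hsdvdS : s ∣ S := (dvd_mul_right s Pb).trans hdvd
  have hsv : s * v = S := Nat.mul_div_cancel' hsdvdS
  have hPbv : Pb ≤ v := by
    have h1 : s * Pb ≤ S := Nat.le_of_dvd hSpos hdvd
    rw [hv, Nat.le_div_iff_mul_le hspos, mul_comm]
    exact h1
  -- sequences
  refine ⟨(s - Pa) + 1, (v - Pb) + 1, 1, Nat.succ_pos _, Nat.succ_pos _, one_pos,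
    Fin.cons Pa (fun _ => 1), ?_, Fin.cons Pb (fun _ => 1), ?_, fun _ => Pc, ?_, t, ?_⟩
  · intro x; refine Fin.cases ?_ ?_ x
    · simpa using hPa.1
    · intro x; simp
  · intro x; refine Fin.cases ?_ ?_ x
    · simpa using hPbpos
    · intro x; simp
  · intro x; positivity
  have hproda : (∏ x, Fin.cons Pa (fun _ => 1 : Fin (s - Pa) → ℕ) x) = Pa := by
    simp [Fin.prod_cons]
  have hsuma : (∑ x, Fin.cons Pa (fun _ => 1 : Fin (s - Pa) → ℕ) x) = s := by
    simp [Fin.sum_cons]; omega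
  have hprodb : (∏ x, Fin.cons Pb (fun _ => 1 : Fin (v - Pb) → ℕ) x) = Pb := by
    simp [Fin.prod_cons]
  have hsumb : (∑ x, Fin.cons Pb (fun _ => 1 : Fin (v - Pb) → ℕ) x) = v := by
    simp [Fin.sum_cons]; omega
  have hprodc : (∏ _x : Fin 1, Pc) = Pc := by simp
  rw [hproda, hsuma, hprodb, hsumb, hprodc]
  refine ⟨hPa.2, rfl, heq.symm, ?_, ?_, ?_, ?_⟩
  · rw [show Pb * 2 ^ s = 2 ^ (i + s) * 3 ^ j by rw [hPb]; ring]
    exact (arms k).1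
  · rw [show Pb * 3 ^ s = 2 ^ i * 3 ^ (j + s) by rw [hPb]; ring]
    exact (arms k).2
  · rw [show Pc * 2 ^ (s * v) = 2 ^ (i' + s * v) * 3 ^ j' by rw [hPc]; ring, hsv]
    exact (arms l).1.trans heq.symm
  · rw [show Pc * 3 ^ (s * v) = 2 ^ i' * 3 ^ (j' + s * v) by rw [hPc]; ring, hsv]
    exact (arms l).2.trans heq.symm
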